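/- For the drift field b(x,y) = −(1/2)(4x+3x², 2y) + (a/2)(−2y, 4x+3x²), the function U(x,y) = 2x² + x³ + y² satisfies the orthogonal decomposition b = −(1/2)∇U + ℓ with ℓ·∇U = 0 everywhere, and consequently U solves the HJB equation b·∇U + (1/2)‖∇U‖² = 0. -/

import Mathlib

/-- For the drift `b = −(1/2)(4x+3x², 2y) + (a/2)(−2y, 4x+3x²)`, the function
`U(x,y) = 2x² + x³ + y²` has gradient `(4x+3x², 2y)`, the decomposition
`b = −(1/2)∇U + ℓ` is orthogonal (`ℓ·∇U = 0`), and `U` solves the HJB equation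
`b·∇U + (1/2)‖∇U‖² = 0`. -/
theorem nonlinear_drift_orthogonal_decomposition (a : ℝ)
    (b₁ b₂ U g₁ g₂ : ℝ → ℝ → ℝ)
    (hb₁ : ∀ x y, b₁ x y = -(1/2) * (4 * x + 3 * x ^ 2) + (a / 2) * (-2 * y))
    (hb₂ : ∀ x y, b₂ x y = -(1/2) * (2 * y) + (a / 2) * (4 * x + 3 * x ^ 2))
    (hU : ∀ x y, U x y = 2 * x ^ 2 + x ^ 3 + y ^ 2)
    (hg₁ : ∀ x y, g₁ x y = 4 * x + 3 * x ^ 2)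
    (hg₂ : ∀ x y, g₂ x y = 2 * y) :
    (∀ x y : ℝ, deriv (fun t => U t y) x = g₁ x y ∧
      deriv (fun t => U x t) y = g₂ x y) ∧
    (∀ x y : ℝ,
      b₁ x y = -(1/2) * g₁ x y + (b₁ x y + (1/2) * g₁ x y) ∧
      b₂ x y = -(1/2) * g₂ x y + (b₂ x y + (1/2) * g₂ x y) ∧
      (b₁ x y + (1/2) * g₁ x y) * g₁ x y + (b₂ x y + (1/2) * g₂ x y) * g₂ x y = 0) ∧
    (∀ x y : ℝ,
      b₁ x y * g₁ x y + b₂ x y * g₂ x y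
        + (1/2) * ((g₁ x y) ^ 2 + (g₂ x y) ^ 2) = 0) := by
  refine ⟨fun x y => ⟨?_, ?_⟩, fun x y => ⟨by ring, by ring, ?_⟩, fun x y => ?_⟩
  · have : (fun t : ℝ => U t y) = fun t => 2 * t ^ 2 + t ^ 3 + y ^ 2 := by
      funext t; rw [hU]
    rw [this, hg₁]
    have h : HasDerivAt (fun t : ℝ => 2 * t ^ 2 + t ^ 3 + y ^ 2) (4 * x + 3 * x ^ 2) x := by
      have := (((hasDerivAt_pow 2 x).const_mul 2).add (hasDerivAt_pow 3 x)).add_const (y ^ 2)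
      refine this.congr_deriv ?_; push_cast; ring
    exact h.deriv
  · have : (fun t : ℝ => U x t) = fun t => 2 * x ^ 2 + x ^ 3 + t ^ 2 := by
      funext t; rw [hU]
    rw [this, hg₂]
    have h : HasDerivAt (fun t : ℝ => 2 * x ^ 2 + x ^ 3 + t ^ 2) (2 * y) y := by
      have := (hasDerivAt_pow 2 y).const_add (2 * x ^ 2 + x ^ 3)
      refine this.congr_deriv ?_; push_cast; ring
    exact h.deriv
  · rw [hb₁, hb₂, hg₁, hg₂]; ring
  · rw [hb₁, hb₂, hg₁, hg₂]; ring
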